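/- Let t, s ≥ 0 and let f, g ∈ 𝔻 satisfy artanh |f| ≤ t and artanh |g| ≤ s. Set o := (0,0), x := (tanh t, f) and y := (−tanh s, g) in the bidisc 𝔻². Then the Gromov product of x and y with respect to o for the Kobayashi distance d₂ of the bidisc vanishes: (1/2)·(d₂(x, o) + d₂(y, o) − d₂(x, y)) = 0. -/

import Mathlib

open Filter Set

noncomputable section

/-- The inverse hyperbolic tangent: `artanh r = (1/2) log ((1+r)/(1-r))`. -/
def artanh (r : ℝ) : ℝ := (1 / 2) * Real.log ((1 + r) / (1 - r))

/-- The Poincaré (Kobayashi) distance on the unit disc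
`ρ(z,w) = artanh |(z - w)/(1 - conj w * z)|`. -/
def pd (z w : ℂ) : ℝ := artanh (‖(z - w) / (1 - (starRingEnd ℂ) w * z)‖)

/-- The Kobayashi distance of the bidisc. -/
def kd2 (z w : ℂ × ℂ) : ℝ := max (pd z.1 w.1) (pd z.2 w.2)

lemma artanh_tanh (u : ℝ) : artanh (Real.tanh u) = u := by
  unfold artanh
  have hc := Real.cosh_pos u
  have h1 : 1 + Real.tanh u = Real.exp u / Real.cosh u := by
    rw [Real.tanh_eq_sinh_div_cosh, Real.cosh_eq, Real.sinh_eq]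
    field_simp; ring
  have h2 : 1 - Real.tanh u = Real.exp (-u) / Real.cosh u := by
    rw [Real.tanh_eq_sinh_div_cosh, Real.cosh_eq, Real.sinh_eq]
    field_simp; ring
  rw [h1, h2, div_div_div_cancel_right₀, ← Real.exp_sub]
  · rw [Real.log_exp]; ring
  · exact hc.ne'

lemma artanh_mono {a b : ℝ} (ha : 0 ≤ a) (hab : a ≤ b) (hb : b < 1) :
    artanh a ≤ artanh b := by
  unfold artanh
  have h1a : 0 < 1 - a := by linarith
  have h1b : 0 < 1 - b := by linarith
  have hpa : 0 < (1 + a) / (1 - a) := by positivity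
  have hle : (1 + a) / (1 - a) ≤ (1 + b) / (1 - b) := by
    rw [div_le_div_iff₀ h1a h1b]; nlinarith
  have := Real.log_le_log hpa hle
  linarith

lemma artanh_add {a b : ℝ} (ha : 0 ≤ a) (ha1 : a < 1) (hb : 0 ≤ b) (hb1 : b < 1) :
    artanh ((a + b) / (1 + a * b)) = artanh a + artanh b := by
  unfold artanh
  have h1a : 0 < 1 - a := by linarith
  have h1b : 0 < 1 - b := by linarith
  have hab : 0 < 1 + a * b := by nlinarith
  have h2r : 1 + (a + b) / (1 + a * b) = ((1 + a) * (1 + b)) / (1 + a * b) := by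
    field_simp; ring
  have h1r : 1 - (a + b) / (1 + a * b) = ((1 - a) * (1 - b)) / (1 + a * b) := by
    field_simp; ring
  have h3 : (1 + a) * (1 + b) / (1 + a * b) / ((1 - a) * (1 - b) / (1 + a * b)) =
      ((1 + a) / (1 - a)) * ((1 + b) / (1 - b)) := by
    rw [div_div_div_eq]
    field_simp
  rw [h2r, h1r, h3, Real.log_mul (by positivity) (by positivity)]
  ring

lemma schwarz_ineq {z w : ℂ} (hz : ‖z‖ < 1) (hw : ‖w‖ < 1) :
    ‖(z - w) / (1 - (starRingEnd ℂ) w * z)‖ ≤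
      (‖z‖ + ‖w‖) / (1 + ‖z‖ * ‖w‖) := by
  have ha : 0 ≤ ‖z‖ := norm_nonneg z
  have hb : 0 ≤ ‖w‖ := norm_nonneg w
  set a := ‖z‖ with ha_def
  set b := ‖w‖ with hb_def
  have hKa : (0:ℝ) < 1 - a ^ 2 := by nlinarith
  have hKb : (0:ℝ) < 1 - b ^ 2 := by nlinarith
  have hK : (0:ℝ) < (1 - a ^ 2) * (1 - b ^ 2) := mul_pos hKa hKb
  have hid0 : Complex.normSq (1 - (starRingEnd ℂ) w * z) - Complex.normSq (z - w) =
      (1 - Complex.normSq z) * (1 - Complex.normSq w) := by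
    simp only [Complex.normSq_apply, Complex.sub_re, Complex.sub_im, Complex.mul_re,
      Complex.mul_im, Complex.one_re, Complex.one_im, Complex.conj_re, Complex.conj_im]
    ring
  set A := ‖z - w‖ with hA_def
  set B := ‖1 - (starRingEnd ℂ) w * z‖ with hB_def
  have hid : B ^ 2 - A ^ 2 = (1 - a ^ 2) * (1 - b ^ 2) := by
    rw [hA_def, hB_def, ha_def, hb_def, Complex.sq_norm, Complex.sq_norm, Complex.sq_norm,
      Complex.sq_norm]
    exact hid0
  have hA : 0 ≤ A := norm_nonneg _
  have hBnn : 0 ≤ B := norm_nonneg _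
  have hB : 0 < B := by nlinarith
  have hAC : A ≤ a + b := by
    simpa [hA_def, ha_def, hb_def] using norm_sub_le z w
  have hD : (0:ℝ) < 1 + a * b := by nlinarith
  rw [norm_div, ← hA_def, ← hB_def, div_le_div_iff₀ hB hD]
  have hA2 : A ^ 2 ≤ (a + b) ^ 2 := by nlinarith
  have hkey : A ^ 2 * ((1 - a ^ 2) * (1 - b ^ 2)) ≤ (a + b) ^ 2 * ((1 - a ^ 2) * (1 - b ^ 2)) :=
    mul_le_mul_of_nonneg_right hA2 hK.le
  have hsq : (A * (1 + a * b)) ^ 2 ≤ ((a + b) * B) ^ 2 := by nlinarith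
  nlinarith [mul_nonneg hA hD.le, mul_nonneg (add_nonneg ha hb) hBnn]

lemma pd_zero (z : ℂ) : pd z 0 = artanh (‖z‖) := by
  simp [pd]

lemma tanh_add_formula (t s : ℝ) :
    (Real.tanh t + Real.tanh s) / (1 + Real.tanh s * Real.tanh t) = Real.tanh (t + s) := by
  have hct := Real.cosh_pos t
  have hcs := Real.cosh_pos s
  have hcts := Real.cosh_pos (t + s)
  have hnum : Real.tanh t + Real.tanh s = Real.sinh (t + s) / (Real.cosh t * Real.cosh s) := by
    rw [Real.tanh_eq_sinh_div_cosh, Real.tanh_eq_sinh_div_cosh, Real.sinh_add]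
    field_simp
  have hden : 1 + Real.tanh s * Real.tanh t = Real.cosh (t + s) / (Real.cosh t * Real.cosh s) := by
    rw [Real.tanh_eq_sinh_div_cosh, Real.tanh_eq_sinh_div_cosh, Real.cosh_add]
    field_simp
  rw [hnum, hden, Real.tanh_eq_sinh_div_cosh, div_div_div_cancel_right₀]
  positivity

theorem gromov_product_eq_zero_bidisc (t s : ℝ) (ht : 0 ≤ t) (hs : 0 ≤ s)
    (f g : ℂ) (hf : ‖f‖ < 1) (hg : ‖g‖ < 1)
    (hft : artanh (‖f‖) ≤ t) (hgs : artanh (‖g‖) ≤ s) :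
    (1 / 2) * (kd2 ((Real.tanh t : ℂ), f) ((0 : ℂ), (0 : ℂ)) +
        kd2 ((-(Real.tanh s) : ℂ), g) ((0 : ℂ), (0 : ℂ)) -
        kd2 ((Real.tanh t : ℂ), f) ((-(Real.tanh s) : ℂ), g)) = 0 := by
  have htt : 0 ≤ Real.tanh t := by
    rw [Real.tanh_eq_sinh_div_cosh]
    exact div_nonneg (Real.sinh_nonneg_iff.mpr ht) (Real.cosh_pos t).le
  have hts : 0 ≤ Real.tanh s := by
    rw [Real.tanh_eq_sinh_div_cosh]
    exact div_nonneg (Real.sinh_nonneg_iff.mpr hs) (Real.cosh_pos s).le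
  -- kd2 x o = t
  have h1 : kd2 ((Real.tanh t : ℂ), f) ((0 : ℂ), (0 : ℂ)) = t := by
    simp only [kd2, pd_zero, Complex.norm_real, Real.norm_eq_abs, abs_of_nonneg htt, artanh_tanh]
    exact max_eq_left hft
  -- kd2 y o = s
  have h2 : kd2 ((-(Real.tanh s) : ℂ), g) ((0 : ℂ), (0 : ℂ)) = s := by
    simp only [kd2, pd_zero]
    rw [show ‖-(Real.tanh s : ℂ)‖ = Real.tanh s by
      rw [norm_neg, Complex.norm_real, Real.norm_eq_abs, abs_of_nonneg hts]]
    rw [artanh_tanh]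
    exact max_eq_left hgs
  -- first coordinate of kd2 x y is t + s
  have hfirst : pd (Real.tanh t : ℂ) (-(Real.tanh s) : ℂ) = t + s := by
    unfold pd
    have hcast : ((Real.tanh t : ℂ) - (-(Real.tanh s) : ℂ)) /
        (1 - (starRingEnd ℂ) (-(Real.tanh s) : ℂ) * (Real.tanh t : ℂ)) =
        (((Real.tanh t + Real.tanh s) / (1 + Real.tanh s * Real.tanh t) : ℝ) : ℂ) := by
      rw [map_neg, Complex.conj_ofReal]
      push_cast
      ring
    rw [hcast, Complex.norm_real, Real.norm_eq_abs, tanh_add_formula, abs_of_nonneg, artanh_tanh]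
    rw [Real.tanh_eq_sinh_div_cosh]
    exact div_nonneg (Real.sinh_nonneg_iff.mpr (by linarith)) (Real.cosh_pos _).le
  -- second coordinate bound
  have hsecond : pd f g ≤ t + s := by
    unfold pd
    set a := ‖f‖
    set b := ‖g‖
    have ha : 0 ≤ a := norm_nonneg f
    have hb : 0 ≤ b := norm_nonneg g
    have hD : (0:ℝ) < 1 + a * b := by nlinarith
    have hlt1 : (a + b) / (1 + a * b) < 1 := by
      rw [div_lt_one hD]; nlinarith
    calc artanh (‖(f - g) / (1 - (starRingEnd ℂ) g * f)‖)
        ≤ artanh ((a + b) / (1 + a * b)) :=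
          artanh_mono (norm_nonneg _) (schwarz_ineq hf hg) hlt1
      _ = artanh a + artanh b := artanh_add ha hf hb hg
      _ ≤ t + s := add_le_add hft hgs
  have h3 : kd2 ((Real.tanh t : ℂ), f) ((-(Real.tanh s) : ℂ), g) = t + s := by
    simp only [kd2]
    rw [hfirst]
    exact max_eq_left hsecond
  rw [h1, h2, h3]
  ring
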